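/- For every x ∈ ℝ and t > 0, the following Poisson summation identity holds: Σ_{k ∈ ℤ} (x + 2kt) · exp(−2(kx + k²t)) = exp(x²/(2t)) · Σ_{k ∈ ℤ} √(π/(2t)) · exp(−k²π²/(2t)) · kπ · sin(kπx/t), where both series converge absolutely. -/

import Mathlib

open Real Filter
open Complex

/-- For every `x ∈ ℝ` and `t > 0`, the Poisson summation identity
`Σ_{k ∈ ℤ} (x + 2kt) e^{−2(kx + k²t)}
  = e^{x²/(2t)} Σ_{k ∈ ℤ} √(π/(2t)) e^{−k²π²/(2t)} kπ sin(kπx/t)`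
holds, and both series converge absolutely. -/
theorem poisson_summation_phi_zero (x t : ℝ) (ht : 0 < t) :
    Summable (fun k : ℤ => (x + 2 * (k : ℝ) * t) *
      Real.exp (-2 * ((k : ℝ) * x + (k : ℝ) ^ 2 * t))) ∧
    Summable (fun k : ℤ => Real.sqrt (Real.pi / (2 * t)) *
      Real.exp (-((k : ℝ) ^ 2 * Real.pi ^ 2) / (2 * t)) *
      ((k : ℝ) * Real.pi) * Real.sin ((k : ℝ) * Real.pi * x / t)) ∧
    (∑' k : ℤ, (x + 2 * (k : ℝ) * t) * Real.exp (-2 * ((k : ℝ) * x + (k : ℝ) ^ 2 * t)))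
      = Real.exp (x ^ 2 / (2 * t)) *
        ∑' k : ℤ, Real.sqrt (Real.pi / (2 * t)) *
          Real.exp (-((k : ℝ) ^ 2 * Real.pi ^ 2) / (2 * t)) *
          ((k : ℝ) * Real.pi) * Real.sin ((k : ℝ) * Real.pi * x / t) := by
  have hπ := Real.pi_pos
  set z : ℂ := (x / π : ℝ) * I with hz
  set τ : ℂ := (2 * t / π : ℝ) * I with hτdef
  set z₂ : ℂ := ((x / (2 * t) : ℝ) : ℂ) with hz₂
  set τ₂ : ℂ := (π / (2 * t) : ℝ) * I with hτ₂def
  have hτ : 0 < τ.im := by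
    rw [hτdef, Complex.mul_I_im, Complex.ofReal_re]
    exact div_pos (by linarith) hπ
  have hτ₂ : 0 < τ₂.im := by
    rw [hτ₂def, Complex.mul_I_im, Complex.ofReal_re]
    exact div_pos hπ (by linarith)
  have hτne : τ ≠ 0 := by
    intro h; rw [h] at hτ; simp at hτ
  have hzτ : z / τ = z₂ := by
    rw [hz, hτdef, hz₂, mul_div_mul_right _ _ I_ne_zero, ← Complex.ofReal_div]
    congr 1
    field_simp
  have hinv : -1 / τ = τ₂ := by
    rw [div_eq_iff hτne, hτdef, hτ₂def]
    calc (-1 : ℂ) = (↑(π / (2*t)) * ↑(2*t/π) : ℂ) * (I * I) := by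
          rw [I_mul_I, ← Complex.ofReal_mul]
          have h : π / (2*t) * (2*t/π) = 1 := by field_simp
          rw [h]; norm_num
      _ = _ := by ring
  have hC : 1 / (-I * τ) ^ ((1:ℂ) / 2) = ((Real.sqrt (π / (2 * t)) : ℝ) : ℂ) := by
    have h1 : -I * τ = ((2 * t / π : ℝ) : ℂ) := by
      rw [hτdef]
      rw [show -I * (((2*t/π : ℝ):ℂ) * I) = ((2*t/π:ℝ):ℂ) * (-(I*I)) from by ring, I_mul_I]
      ring
    have h2 : ((2*t/π:ℝ):ℂ) ^ ((1:ℂ)/2) = ((Real.sqrt (2*t/π) : ℝ) : ℂ) := by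
      rw [show ((1:ℂ)/2) = ((1/2 : ℝ) : ℂ) from by norm_num,
        ← Complex.ofReal_cpow (by positivity) (1/2 : ℝ), ← Real.sqrt_eq_rpow]
    rw [h1, h2, one_div, ← Complex.ofReal_inv,
      show π/(2*t) = (2*t/π)⁻¹ from by field_simp, Real.sqrt_inv]
  have hπc : (π:ℂ) ≠ 0 := Complex.ofReal_ne_zero.mpr hπ.ne'
  have htc : (t:ℂ) ≠ 0 := Complex.ofReal_ne_zero.mpr ht.ne'
  have hE : cexp (-↑π * I * z ^ 2 / τ) = ((Real.exp (x ^ 2 / (2 * t)) : ℝ) : ℂ) := by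
    rw [Complex.ofReal_exp]
    congr 1
    have hz2 : z^2 = -(((x/π : ℝ):ℂ))^2 := by rw [hz, mul_pow, I_sq]; ring
    rw [div_eq_iff hτne, hz2, hτdef]
    push_cast
    field_simp
  -- left-hand side complex sum
  have hterm1 : ∀ k : ℤ, (x:ℂ) * jacobiTheta₂_term k z τ + (t:ℂ)/((π:ℝ)*I) * jacobiTheta₂'_term k z τ
      = (((x + 2*(k:ℝ)*t) * Real.exp (-2*((k:ℝ)*x + (k:ℝ)^2*t)) : ℝ) : ℂ) := by
    intro k
    have he : 2*(π:ℂ)*I*(k:ℂ)*z + (π:ℂ)*I*(k:ℂ)^2*τ = ((-2*((k:ℝ)*x + (k:ℝ)^2*t) : ℝ) : ℂ) := by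
      rw [hz, hτdef]
      calc 2*(π:ℂ)*I*(k:ℂ)*(((x/π:ℝ):ℂ)*I) + (π:ℂ)*I*(k:ℂ)^2*(((2*t/π:ℝ):ℂ)*I)
          = (I*I) * (2*(π:ℂ)*(k:ℂ)*((x/π:ℝ):ℂ) + (π:ℂ)*(k:ℂ)^2*((2*t/π:ℝ):ℂ)) := by ring
        _ = _ := by rw [I_mul_I]; push_cast; field_simp; try ring
    rw [jacobiTheta₂'_term, jacobiTheta₂_term, he, ← Complex.ofReal_exp]
    have hIπ : (π:ℂ) * I ≠ 0 := mul_ne_zero hπc I_ne_zero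
    field_simp
    push_cast
    ring
  have hterm2 : ∀ k : ℤ, ((((-(Real.sqrt (π/(2*t)))/2 : ℝ)):ℂ) * jacobiTheta₂'_term k z₂ τ₂).re
      = Real.sqrt (π/(2*t)) * Real.exp (-((k:ℝ)^2*π^2)/(2*t)) * ((k:ℝ)*π) * Real.sin ((k:ℝ)*π*x/t) := by
    intro k
    have he : 2*(π:ℂ)*I*(k:ℂ)*z₂ + (π:ℂ)*I*(k:ℂ)^2*τ₂
        = ((-((k:ℝ)^2*π^2)/(2*t) : ℝ) : ℂ) + (((k:ℝ)*π*x/t : ℝ) : ℂ)*I := by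
      rw [hz₂, hτ₂def]
      calc 2*(π:ℂ)*I*(k:ℂ)*((x/(2*t):ℝ):ℂ) + (π:ℂ)*I*(k:ℂ)^2*(((π/(2*t):ℝ):ℂ)*I)
          = ((π:ℂ)*(k:ℂ)^2*((π/(2*t):ℝ):ℂ))*(I*I) + (2*(π:ℂ)*(k:ℂ)*((x/(2*t):ℝ):ℂ))*I := by
            ring
        _ = _ := by rw [I_mul_I]; push_cast; field_simp; try ring
    rw [jacobiTheta₂'_term, jacobiTheta₂_term, he, Complex.exp_add, Complex.exp_mul_I,
      ← Complex.ofReal_exp, ← Complex.ofReal_cos, ← Complex.ofReal_sin]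
    simp only [Complex.mul_re, Complex.mul_im, Complex.add_re, Complex.add_im, Complex.I_re,
      Complex.I_im, Complex.ofReal_re, Complex.ofReal_im, Complex.re_ofNat, Complex.im_ofNat, Complex.intCast_re, Complex.intCast_im]
    ring
  have k1 : (π:ℂ) * I * τ = -2*(t:ℂ) := by
    rw [hτdef]
    calc (π:ℂ)*I*(((2*t/π:ℝ):ℂ)*I) = ((π:ℂ)*((2*t/π:ℝ):ℂ))*(I*I) := by ring
      _ = _ := by rw [I_mul_I]; push_cast; field_simp; try ring
  have k2 : 2*(t:ℂ)*z = (x:ℂ) * τ := by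
    rw [hz, hτdef]; push_cast; field_simp; try ring
  have key : (x:ℂ) * jacobiTheta₂ z τ + (t:ℂ)/((π:ℝ)*I) * jacobiTheta₂' z τ
      = ((Real.exp (x^2/(2*t)) : ℝ) : ℂ) *
        ((((-(Real.sqrt (π/(2*t)))/2 : ℝ)):ℂ) * jacobiTheta₂' z₂ τ₂) := by
    rw [jacobiTheta₂_functional_equation z τ, jacobiTheta₂'_functional_equation z τ,
      hzτ, hinv, hC, hE]
    have hIπ : (π:ℂ) * I ≠ 0 := mul_ne_zero hπc I_ne_zero
    have hs : ((-(Real.sqrt (π/(2*t)))/2 : ℝ):ℂ) = -((Real.sqrt (π/(2*t)):ℝ):ℂ)/2 := by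
      push_cast; ring
    rw [hs]
    set A := jacobiTheta₂ z₂ τ₂ with hA
    set B := jacobiTheta₂' z₂ τ₂ with hB
    set s : ℂ := ((Real.sqrt (π/(2*t)):ℝ):ℂ) with hsdef
    set e : ℂ := ((Real.exp (x^2/(2*t)) : ℝ):ℂ) with hedef
    field_simp [hτne]
    ring_nf
    linear_combination (s*e*B) * k1 + (-2*s*e*A*(π:ℂ)*I) * k2
  -- assemble
  have hFsum : HasSum (fun k : ℤ => (((x + 2*(k:ℝ)*t) * Real.exp (-2*((k:ℝ)*x + (k:ℝ)^2*t)) : ℝ) : ℂ))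
      ((x:ℂ) * jacobiTheta₂ z τ + (t:ℂ)/((π:ℝ)*I) * jacobiTheta₂' z τ) := by
    have h := ((hasSum_jacobiTheta₂_term z hτ).mul_left (x:ℂ)).add
      ((hasSum_jacobiTheta₂'_term z hτ).mul_left ((t:ℂ)/((π:ℝ)*I)))
    simpa only [hterm1] using h
  have hGsum : HasSum (fun k : ℤ => (((-(Real.sqrt (π/(2*t)))/2 : ℝ)):ℂ) * jacobiTheta₂'_term k z₂ τ₂)
      ((((-(Real.sqrt (π/(2*t)))/2 : ℝ)):ℂ) * jacobiTheta₂' z₂ τ₂) :=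
    (hasSum_jacobiTheta₂'_term z₂ hτ₂).mul_left _
  have hL : HasSum (fun k : ℤ => (x + 2*(k:ℝ)*t) * Real.exp (-2*((k:ℝ)*x + (k:ℝ)^2*t)))
      (((x:ℂ) * jacobiTheta₂ z τ + (t:ℂ)/((π:ℝ)*I) * jacobiTheta₂' z τ).re) := by
    have h := hFsum.mapL Complex.reCLM
    simp only [Complex.reCLM_apply, Complex.ofReal_re] at h
    exact h
  have hR : HasSum (fun k : ℤ => Real.sqrt (π/(2*t)) * Real.exp (-((k:ℝ)^2*π^2)/(2*t)) *
        ((k:ℝ)*π) * Real.sin ((k:ℝ)*π*x/t))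
      (((((-(Real.sqrt (π/(2*t)))/2 : ℝ)):ℂ) * jacobiTheta₂' z₂ τ₂).re) := by
    have h := hGsum.mapL Complex.reCLM
    simp only [Complex.reCLM_apply] at h
    simpa only [hterm2] using h
  refine ⟨hL.summable, hR.summable, ?_⟩
  rw [hL.tsum_eq, hR.tsum_eq, key, Complex.re_ofReal_mul]
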